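/- For an integer m ≥ 3, let Ω denote the m × m real matrix with rows and columns indexed by 0, 1, …, m−1, whose entries are: Ω(0,1) = 2; Ω(i,j) = 1 whenever |i − j| = 1 and (i,j) ≠ (0,1); Ω(m−1,0) = 1; and all other entries equal 0. If m is even (so m ≥ 4), then for every t ∈ ℝ and every p with 1 ≤ p ≤ m−1, the (0,p) entry of the matrix exponential exp(tΩ) equals (2/m²)·( (m−p)·( e^{2t} + (−1)^p·e^{−2t} ) + 2·Σ_{q=1}^{(m−2)/2} [ (m−p)·cos(2πpq/m) + 2t·sin(2πpq/m)·sin(2πq/m) ]·e^{2t·cos(2πq/m)} ). -/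

import Mathlib

open scoped BigOperators

/-- The `m × m` comparison matrix `Ω`: `Ω 0 1 = 2`, `Ω i j = 1` when `|i − j| = 1`
and `(i,j) ≠ (0,1)`, `Ω (m−1) 0 = 1`, all other entries `0`. -/
def OmegaMat (m : ℕ) : Matrix (Fin m) (Fin m) ℝ := fun i j =>
  if i.val = 0 ∧ j.val = 1 then 2
  else if i.val + 1 = j.val ∨ j.val + 1 = i.val then 1
  else if i.val = m - 1 ∧ j.val = 0 then 1
  else 0

/-! ### Auxiliary definitions -/

/-- The entries of `Ω` as a function on `ℕ`. -/
def s9W (m i j : ℕ) : ℝ :=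
  if i = 0 ∧ j = 1 then 2
  else if i + 1 = j ∨ j + 1 = i then 1
  else if i = m - 1 ∧ j = 0 then 1
  else 0

lemma s9W_omega (m : ℕ) (i j : Fin m) : OmegaMat m i j = s9W m i.val j.val := rfl

/-- The claimed closed form for row-0 entries of `exp(tΩ)` (for columns `p ≥ 1`). -/
noncomputable def s9F (m p : ℕ) (t : ℝ) : ℝ :=
  (2 / (m : ℝ) ^ 2) * (((m : ℝ) - p) *
      (Real.exp (2 * t) + (-1 : ℝ) ^ p * Real.exp (-2 * t)) +
    2 * ∑ q ∈ Finset.Icc 1 ((m - 2) / 2),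
      (((m : ℝ) - p) * Real.cos (2 * Real.pi * p * q / m) +
        2 * t * Real.sin (2 * Real.pi * p * q / m) * Real.sin (2 * Real.pi * q / m)) *
      Real.exp (2 * t * Real.cos (2 * Real.pi * q / m)))

/-- The derivative of `s9F` in `t`. -/
noncomputable def s9D (m p : ℕ) (t : ℝ) : ℝ :=
  (2 / (m : ℝ) ^ 2) * (((m : ℝ) - p) *
      (2 * Real.exp (2 * t) - 2 * (-1 : ℝ) ^ p * Real.exp (-2 * t)) +
    2 * ∑ q ∈ Finset.Icc 1 ((m - 2) / 2),
      (2 * Real.sin (2 * Real.pi * p * q / m) * Real.sin (2 * Real.pi * q / m) +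
        (((m : ℝ) - p) * Real.cos (2 * Real.pi * p * q / m) +
          2 * t * Real.sin (2 * Real.pi * p * q / m) * Real.sin (2 * Real.pi * q / m)) *
          (2 * Real.cos (2 * Real.pi * q / m))) *
      Real.exp (2 * t * Real.cos (2 * Real.pi * q / m)))

/-- Row 0 of `exp(tΩ)`: entry 0 is `s9F m 0 t / 2`, entry `p ≥ 1` is `s9F m p t`. -/
noncomputable def s9g (m p : ℕ) (t : ℝ) : ℝ := if p = 0 then s9F m 0 t / 2 else s9F m p t

/-! ### Matrix exponential infrastructure -/

lemma expOmega_mul_comm (m : ℕ) (u : ℝ) :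
    OmegaMat m * NormedSpace.exp (u • OmegaMat m)
      = NormedSpace.exp (u • OmegaMat m) * OmegaMat m := by
  letI : SeminormedRing (Matrix (Fin m) (Fin m) ℝ) := Matrix.linftyOpSemiNormedRing
  letI : NormedRing (Matrix (Fin m) (Fin m) ℝ) := Matrix.linftyOpNormedRing
  letI : NormedAlgebra ℝ (Matrix (Fin m) (Fin m) ℝ) := Matrix.linftyOpNormedAlgebra
  exact (((Commute.refl (OmegaMat m)).smul_right u).exp_right).eq

lemma expOmega_inv (m : ℕ) (t : ℝ) :
    NormedSpace.exp ((-t) • OmegaMat m) * NormedSpace.exp (t • OmegaMat m) = 1 := by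
  rw [← Matrix.exp_add_of_commute _ _
    (((Commute.refl (OmegaMat m)).smul_right t).smul_left (-t))]
  rw [← add_smul, neg_add_cancel, zero_smul, NormedSpace.exp_zero]

lemma expOmega_entry_deriv (m : ℕ) (i j : Fin m) (t : ℝ) :
    HasDerivAt (fun u : ℝ => NormedSpace.exp (u • OmegaMat m) i j)
      ((NormedSpace.exp (t • OmegaMat m) * OmegaMat m) i j) t := by
  letI : SeminormedRing (Matrix (Fin m) (Fin m) ℝ) := Matrix.linftyOpSemiNormedRing
  letI : NormedRing (Matrix (Fin m) (Fin m) ℝ) := Matrix.linftyOpNormedRing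
  letI : NormedAlgebra ℝ (Matrix (Fin m) (Fin m) ℝ) := Matrix.linftyOpNormedAlgebra
  have h := hasDerivAt_exp_smul_const (𝕂 := ℝ) (OmegaMat m) t
  let L : Matrix (Fin m) (Fin m) ℝ →ₗ[ℝ] ℝ := Matrix.entryLinearMap ℝ ℝ i j
  exact (LinearMap.toContinuousLinearMap L).hasFDerivAt.comp_hasDerivAt t h

/-! ### Trigonometric lemmas -/

lemma s9refl_cos' (m q : ℕ) (hm : 1 ≤ m) :
    Real.cos (2 * Real.pi * ((m : ℝ) - 1) * q / m) = Real.cos (2 * Real.pi * q / m) := by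
  have hm0 : (m : ℝ) ≠ 0 := Nat.cast_ne_zero.mpr (by omega)
  have ha : 2 * Real.pi * ((m : ℝ) - 1) * q / m
      = (q : ℝ) * (2 * Real.pi) - 2 * Real.pi * q / m := by
    field_simp
  rw [ha, Real.cos_nat_mul_two_pi_sub]

lemma s9refl_sin' (m q : ℕ) (hm : 1 ≤ m) :
    Real.sin (2 * Real.pi * ((m : ℝ) - 1) * q / m) = -Real.sin (2 * Real.pi * q / m) := by
  have hm0 : (m : ℝ) ≠ 0 := Nat.cast_ne_zero.mpr (by omega)
  have ha : 2 * Real.pi * ((m : ℝ) - 1) * q / m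
      = ((2 * q : ℕ) : ℝ) * Real.pi - 2 * Real.pi * q / m := by
    push_cast; field_simp
  rw [ha, Real.sin_nat_mul_pi_sub]
  simp [pow_mul]

lemma s9sin_top (m q : ℕ) (hm : 1 ≤ m) :
    Real.sin (2 * Real.pi * (m : ℝ) * q / m) = 0 := by
  have hm0 : (m : ℝ) ≠ 0 := Nat.cast_ne_zero.mpr (by omega)
  have ha : 2 * Real.pi * (m : ℝ) * q / m = ((2 * q : ℕ) : ℝ) * Real.pi := by
    push_cast; field_simp
  rw [ha, Real.sin_nat_mul_pi]

lemma s9dirichlet (a : ℝ) (N : ℕ) :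
    2 * Real.sin (a / 2) * ∑ q ∈ Finset.Icc 1 N, Real.cos (q * a)
      = Real.sin (((N : ℝ) + 1 / 2) * a) - Real.sin (a / 2) := by
  induction N with
  | zero =>
      have h0 : Finset.Icc 1 0 = (∅ : Finset ℕ) := by decide
      rw [h0, Finset.sum_empty, mul_zero, Nat.cast_zero]
      rw [show ((0 : ℝ) + 1 / 2) * a = a / 2 by ring, sub_self]
  | succ n ih =>
      rw [Finset.sum_Icc_succ_top (by omega : 1 ≤ n + 1), mul_add, ih]
      push_cast
      have h1 : ((n : ℝ) + 1 + 1 / 2) * a = ((n : ℝ) + 1) * a + a / 2 := by ring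
      have h2 : ((n : ℝ) + 1 / 2) * a = ((n : ℝ) + 1) * a - a / 2 := by ring
      rw [h1, h2, Real.sin_add, Real.sin_sub]
      ring

lemma s9cos_sum (m p : ℕ) (hm : 3 ≤ m) (heven : Even m) (hp1 : 1 ≤ p) (hpm : p ≤ m - 1) :
    (1 + (-1 : ℝ) ^ p) + 2 * ∑ q ∈ Finset.Icc 1 ((m - 2) / 2),
      Real.cos (2 * Real.pi * p * q / m) = 0 := by
  obtain ⟨k, hk⟩ := heven
  have hk2 : 2 ≤ k := by omega
  have hm0 : (m : ℝ) ≠ 0 := Nat.cast_ne_zero.mpr (by omega)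
  set a : ℝ := 2 * Real.pi * p / m with ha
  have hcongr : ∀ q ∈ Finset.Icc 1 ((m - 2) / 2),
      Real.cos (2 * Real.pi * p * q / m) = Real.cos ((q : ℝ) * a) := by
    intro q hq
    congr 1
    rw [ha]; ring
  rw [Finset.sum_congr rfl hcongr]
  have hd := s9dirichlet a ((m - 2) / 2)
  have ha2 : a / 2 = Real.pi * p / m := by rw [ha]; ring
  have hs : Real.sin (Real.pi * p / m) ≠ 0 := by
    have h1 : 0 < Real.pi * p / m := by
      apply div_pos
      · exact mul_pos Real.pi_pos (by exact_mod_cast Nat.pos_of_ne_zero (by omega))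
      · exact_mod_cast Nat.pos_of_ne_zero (by omega)
    have h2 : Real.pi * p / m < Real.pi := by
      rw [div_lt_iff₀ (by exact_mod_cast Nat.pos_of_ne_zero (by omega))]
      have hpm' : (p : ℝ) < m := by exact_mod_cast (by omega : p < m)
      nlinarith [Real.pi_pos]
    exact ne_of_gt (Real.sin_pos_of_pos_of_lt_pi h1 h2)
  have hNcast : (((m - 2) / 2 : ℕ) : ℝ) = (k : ℝ) - 1 := by
    have h : (m - 2) / 2 = k - 1 := by omega
    rw [h, Nat.cast_sub (by omega), Nat.cast_one]
  have htop : Real.sin (((((m - 2) / 2 : ℕ) : ℝ) + 1 / 2) * a)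
      = -((-1 : ℝ) ^ p * Real.sin (Real.pi * p / m)) := by
    have harg : ((((m - 2) / 2 : ℕ) : ℝ) + 1 / 2) * a = (p : ℝ) * Real.pi - Real.pi * p / m := by
      rw [hNcast, ha]
      have hmk : (m : ℝ) = 2 * k := by exact_mod_cast (by omega : m = 2 * k)
      field_simp [hmk]
      rw [hmk]
      ring
    rw [harg, Real.sin_nat_mul_pi_sub]
  rw [ha2, htop] at hd
  set S := ∑ q ∈ Finset.Icc 1 ((m - 2) / 2), Real.cos ((q : ℝ) * a)
  have key : Real.sin (Real.pi * p / m) * ((1 + (-1 : ℝ) ^ p) + 2 * S) = 0 := by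
    nlinarith [hd]
  rcases mul_eq_zero.mp key with h | h
  · exact absurd h hs
  · exact h

/-! ### Derivative of `s9F` -/

lemma s9F_hasDerivAt (m p : ℕ) (t : ℝ) : HasDerivAt (s9F m p) (s9D m p t) t := by
  unfold s9F s9D
  apply HasDerivAt.const_mul
  apply HasDerivAt.add
  · have h1 : HasDerivAt (fun t : ℝ => Real.exp (2 * t)) (2 * Real.exp (2 * t)) t := by
      simpa [mul_comm] using (((hasDerivAt_id t).const_mul 2).exp)
    have h2 : HasDerivAt (fun t : ℝ => Real.exp (-2 * t)) (-2 * Real.exp (-2 * t)) t := by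
      simpa [mul_comm] using (((hasDerivAt_id t).const_mul (-2)).exp)
    have h := (h1.add (h2.const_mul ((-1 : ℝ) ^ p))).const_mul ((m : ℝ) - p)
    refine h.congr_deriv (Eq.symm ?_)
    ring
  · apply HasDerivAt.const_mul
    apply HasDerivAt.fun_sum
    intro q hq
    set x := 2 * Real.pi * (p : ℝ) * q / (m : ℝ) with hx
    set y := 2 * Real.pi * (q : ℝ) / (m : ℝ) with hy
    have h1 : HasDerivAt
        (fun t : ℝ => ((m : ℝ) - p) * Real.cos x + 2 * t * Real.sin x * Real.sin y)
        (2 * Real.sin x * Real.sin y) t := by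
      have hfun : (fun t : ℝ => ((m : ℝ) - p) * Real.cos x + 2 * t * Real.sin x * Real.sin y)
          = (fun t : ℝ => ((m : ℝ) - p) * Real.cos x + (2 * Real.sin x * Real.sin y) * t) := by
        funext u; ring
      rw [hfun]
      simpa using ((hasDerivAt_id t).const_mul (2 * Real.sin x * Real.sin y)).const_add
        (((m : ℝ) - p) * Real.cos x)
    have h2 : HasDerivAt (fun t : ℝ => Real.exp (2 * t * Real.cos y))
        (Real.exp (2 * t * Real.cos y) * (2 * Real.cos y)) t := by
      have hfun : (fun t : ℝ => Real.exp (2 * t * Real.cos y))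
          = (fun t : ℝ => Real.exp ((2 * Real.cos y) * t)) := by funext u; ring_nf
      rw [hfun]
      have h := (((hasDerivAt_id t).const_mul (2 * Real.cos y)).exp)
      simpa [mul_comm, mul_assoc, mul_left_comm] using h
    refine (h1.mul h2).congr_deriv (Eq.symm ?_)
    ring

/-! ### Algebraic identities for `s9D` -/

lemma s9D_mid (m p : ℕ) (t : ℝ) : s9D m (p + 1) t = s9F m p t + s9F m (p + 2) t := by
  unfold s9D s9F
  rw [← mul_add]
  congr 1
  have hq : ∀ q ∈ Finset.Icc 1 ((m - 2) / 2),
      (2 * Real.sin (2 * Real.pi * ((p:ℕ)+1 : ℕ) * q / m) * Real.sin (2 * Real.pi * q / m) +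
        (((m : ℝ) - ((p:ℕ)+1 : ℕ)) * Real.cos (2 * Real.pi * ((p:ℕ)+1 : ℕ) * q / m) +
          2 * t * Real.sin (2 * Real.pi * ((p:ℕ)+1 : ℕ) * q / m) * Real.sin (2 * Real.pi * q / m)) *
          (2 * Real.cos (2 * Real.pi * q / m))) *
      Real.exp (2 * t * Real.cos (2 * Real.pi * q / m))
      = (((m : ℝ) - p) * Real.cos (2 * Real.pi * p * q / m) +
          2 * t * Real.sin (2 * Real.pi * p * q / m) * Real.sin (2 * Real.pi * q / m)) *
        Real.exp (2 * t * Real.cos (2 * Real.pi * q / m)) +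
        (((m : ℝ) - ((p:ℕ)+2 : ℕ)) * Real.cos (2 * Real.pi * ((p:ℕ)+2 : ℕ) * q / m) +
          2 * t * Real.sin (2 * Real.pi * ((p:ℕ)+2 : ℕ) * q / m) * Real.sin (2 * Real.pi * q / m)) *
        Real.exp (2 * t * Real.cos (2 * Real.pi * q / m)) := by
    intro q hq
    push_cast
    have h1 : 2 * Real.pi * (p : ℝ) * q / m
        = 2 * Real.pi * ((p : ℝ) + 1) * q / m - 2 * Real.pi * q / m := by ring
    have h2 : 2 * Real.pi * ((p : ℝ) + 2) * q / m
        = 2 * Real.pi * ((p : ℝ) + 1) * q / m + 2 * Real.pi * q / m := by ring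
    rw [h1, h2, Real.cos_sub, Real.cos_add, Real.sin_sub, Real.sin_add]
    ring
  rw [Finset.sum_congr rfl hq, Finset.sum_add_distrib]
  push_cast [pow_succ]
  ring

lemma s9D_zero (m : ℕ) (hm : 3 ≤ m) (heven : Even m) (t : ℝ) :
    s9D m 0 t = 2 * (s9F m 1 t + s9F m (m - 1) t) := by
  have hmodd : Odd (m - 1) := Nat.Even.sub_odd (by omega) heven odd_one
  have hcast : ((m - 1 : ℕ) : ℝ) = (m : ℝ) - 1 := by
    rw [Nat.cast_sub (by omega : 1 ≤ m), Nat.cast_one]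
  unfold s9D s9F
  rw [hcast, Odd.neg_one_pow hmodd]
  have hq : ∀ q ∈ Finset.Icc 1 ((m - 2) / 2),
      (2 * Real.sin (2 * Real.pi * ((0:ℕ) : ℝ) * q / m) * Real.sin (2 * Real.pi * q / m) +
        (((m : ℝ) - ((0:ℕ) : ℝ)) * Real.cos (2 * Real.pi * ((0:ℕ) : ℝ) * q / m) +
          2 * t * Real.sin (2 * Real.pi * ((0:ℕ) : ℝ) * q / m) * Real.sin (2 * Real.pi * q / m)) *
          (2 * Real.cos (2 * Real.pi * q / m))) *
      Real.exp (2 * t * Real.cos (2 * Real.pi * q / m))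
      = 2 * ((((m : ℝ) - ((1:ℕ) : ℝ)) * Real.cos (2 * Real.pi * ((1:ℕ) : ℝ) * q / m) +
          2 * t * Real.sin (2 * Real.pi * ((1:ℕ) : ℝ) * q / m) * Real.sin (2 * Real.pi * q / m)) *
        Real.exp (2 * t * Real.cos (2 * Real.pi * q / m)) +
        (((m : ℝ) - ((m : ℝ) - 1)) * Real.cos (2 * Real.pi * ((m : ℝ) - 1) * q / m) +
          2 * t * Real.sin (2 * Real.pi * ((m : ℝ) - 1) * q / m) * Real.sin (2 * Real.pi * q / m)) *
        Real.exp (2 * t * Real.cos (2 * Real.pi * q / m))) := by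
    intro q _
    rw [s9refl_cos' m q (by omega), s9refl_sin' m q (by omega)]
    push_cast
    rw [show 2 * Real.pi * (0 : ℝ) * q / m = 0 by ring, Real.sin_zero, Real.cos_zero,
      show 2 * Real.pi * (1 : ℝ) * q / m = 2 * Real.pi * q / m by ring]
    ring
  rw [Finset.sum_congr rfl hq, ← Finset.mul_sum, Finset.sum_add_distrib]
  push_cast
  ring

lemma s9F_top (m : ℕ) (hm : 1 ≤ m) (t : ℝ) : s9F m m t = 0 := by
  unfold s9F
  have h : ∀ q ∈ Finset.Icc 1 ((m - 2) / 2),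
      (((m : ℝ) - (m : ℕ)) * Real.cos (2 * Real.pi * (m : ℕ) * q / m) +
        2 * t * Real.sin (2 * Real.pi * (m : ℕ) * q / m) * Real.sin (2 * Real.pi * q / m)) *
      Real.exp (2 * t * Real.cos (2 * Real.pi * q / m)) = 0 := by
    intro q _
    rw [show ((m : ℕ) : ℝ) = (m : ℝ) from rfl, s9sin_top m q hm, sub_self]
    ring
  rw [Finset.sum_congr rfl h, Finset.sum_const_zero, sub_self]
  ring

/-! ### Initial values -/

lemma s9g_init (m j : ℕ) (hm : 3 ≤ m) (heven : Even m) (hj : j ≤ m - 1) :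
    s9g m j 0 = if j = 0 then 1 else 0 := by
  by_cases h0 : j = 0
  · subst h0
    obtain ⟨k, hk⟩ := heven
    have hk2 : 2 ≤ k := by omega
    have hk0 : (k : ℝ) ≠ 0 := Nat.cast_ne_zero.mpr (by omega)
    simp only [s9g, if_pos rfl, s9F]
    have hq : ∀ q ∈ Finset.Icc 1 ((m - 2) / 2),
        (((m : ℝ) - ((0:ℕ) : ℝ)) * Real.cos (2 * Real.pi * ((0:ℕ) : ℝ) * q / m) +
          2 * (0:ℝ) * Real.sin (2 * Real.pi * ((0:ℕ) : ℝ) * q / m) *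
            Real.sin (2 * Real.pi * q / m)) *
        Real.exp (2 * 0 * Real.cos (2 * Real.pi * q / m)) = (m : ℝ) := by
      intro q _
      push_cast
      rw [show 2 * Real.pi * (0 : ℝ) * q / m = 0 by ring, Real.cos_zero,
        show 2 * (0:ℝ) * Real.cos (2 * Real.pi * q / m) = 0 by ring, Real.exp_zero]
      ring
    rw [Finset.sum_congr rfl hq, Finset.sum_const, Nat.card_Icc]
    have hcard : (m - 2) / 2 + 1 - 1 = k - 1 := by omega
    rw [hcard]
    have hcast : ((k - 1 : ℕ) : ℝ) = (k : ℝ) - 1 := by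
      rw [Nat.cast_sub (by omega), Nat.cast_one]
    have hmcast : (m : ℝ) = 2 * k := by exact_mod_cast (by omega : m = 2 * k)
    simp only [mul_zero, zero_mul, neg_zero, Real.exp_zero, pow_zero, Nat.cast_zero, sub_zero,
      nsmul_eq_mul, hcast, eq_self_iff_true, if_true, ite_true]
    rw [hmcast]
    field_simp
    ring
  · simp only [s9g, if_neg h0, s9F]
    have hp1 : 1 ≤ j := by omega
    have hq : ∀ q ∈ Finset.Icc 1 ((m - 2) / 2),
        (((m : ℝ) - (j : ℝ)) * Real.cos (2 * Real.pi * (j : ℝ) * q / m) +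
          2 * (0:ℝ) * Real.sin (2 * Real.pi * (j : ℝ) * q / m) * Real.sin (2 * Real.pi * q / m)) *
        Real.exp (2 * 0 * Real.cos (2 * Real.pi * q / m))
        = ((m : ℝ) - (j : ℝ)) * Real.cos (2 * Real.pi * (j : ℝ) * q / m) := by
      intro q _
      rw [show 2 * (0:ℝ) * Real.cos (2 * Real.pi * q / m) = 0 by ring, Real.exp_zero]
      ring
    rw [Finset.sum_congr rfl hq, ← Finset.mul_sum]
    have hz := s9cos_sum m j hm heven hp1 hj
    simp only [mul_zero, zero_mul, neg_zero, Real.exp_zero]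
    linear_combination (2 / (m:ℝ)^2 * ((m:ℝ) - j)) * hz

/-! ### Sparse sum helpers -/

lemma s9W_val2 (m i j : ℕ) (h1 : ¬(i = 0 ∧ j = 1)) (h2 : i + 1 = j ∨ j + 1 = i) :
    s9W m i j = 1 := by
  simp only [s9W]; rw [if_neg h1, if_pos h2]

lemma s9W_val3 (m i j : ℕ) (h1 : ¬(i = 0 ∧ j = 1)) (h2 : ¬(i + 1 = j ∨ j + 1 = i))
    (h3 : i = m - 1 ∧ j = 0) : s9W m i j = 1 := by
  simp only [s9W]; rw [if_neg h1, if_neg h2, if_pos h3]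

lemma s9W_val0 (m i j : ℕ) (h1 : ¬(i = 0 ∧ j = 1)) (h2 : ¬(i + 1 = j ∨ j + 1 = i))
    (h3 : ¬(i = m - 1 ∧ j = 0)) : s9W m i j = 0 := by
  simp only [s9W]; rw [if_neg h1, if_neg h2, if_neg h3]

lemma s9W_val1 (m i j : ℕ) (h1 : i = 0 ∧ j = 1) : s9W m i j = 2 := by
  simp only [s9W]; rw [if_pos h1]

lemma s9sum2 (m a b : ℕ) (f : ℕ → ℝ) (hab : a ≠ b) (ha : a < m) (hb : b < m)
    (hz : ∀ x, x < m → x ≠ a → x ≠ b → f x = 0) :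
    ∑ k ∈ Finset.range m, f k = f a + f b := by
  rw [← Finset.sum_subset (s₁ := ({a, b} : Finset ℕ)) (s₂ := Finset.range m)
    (by intro x hx
        simp only [Finset.mem_insert, Finset.mem_singleton] at hx
        rcases hx with rfl | rfl <;> simpa [Finset.mem_range])
    (by intro x hx hnx
        simp only [Finset.mem_insert, Finset.mem_singleton, not_or] at hnx
        exact hz x (Finset.mem_range.mp hx) hnx.1 hnx.2)]
  exact Finset.sum_pair hab

lemma s9sum1 (m a : ℕ) (f : ℕ → ℝ) (ha : a < m)
    (hz : ∀ x, x < m → x ≠ a → f x = 0) :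
    ∑ k ∈ Finset.range m, f k = f a := by
  rw [← Finset.sum_subset (s₁ := ({a} : Finset ℕ)) (s₂ := Finset.range m)
    (by intro x hx
        simp only [Finset.mem_singleton] at hx
        subst hx; simpa [Finset.mem_range])
    (by intro x hx hnx
        simp only [Finset.mem_singleton] at hnx
        exact hz x (Finset.mem_range.mp hx) hnx)]
  exact Finset.sum_singleton _ _

/-! ### The key derivative identity for the row functions -/

lemma s9g_hasDeriv (m : ℕ) (hm : 3 ≤ m) (heven : Even m) (t : ℝ) (j : ℕ) (hj : j < m) :
    HasDerivAt (fun u => s9g m j u)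
      (∑ k ∈ Finset.range m, s9W m k j * s9g m k t) t := by
  have hm4 : 4 ≤ m := by obtain ⟨k, hk⟩ := heven; omega
  have hgF : ∀ p : ℕ, p ≠ 0 → (s9g m p : ℝ → ℝ) = s9F m p := by
    intro p hp; funext u; simp [s9g, hp]
  rcases eq_or_ne j 0 with rfl | hj0
  · -- column 0
    rw [s9sum2 m 1 (m - 1) _ (by omega) (by omega) (by omega)
      (fun x hx hx1 hx2 => by
        rw [s9W_val0 m x 0 (by omega) (by omega) (by omega), zero_mul])]
    rw [s9W_val2 m 1 0 (by omega) (by omega),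
      s9W_val3 m (m - 1) 0 (by omega) (by omega) (by omega)]
    have h := (s9F_hasDerivAt m 0 t).div_const 2
    have hfun : (fun u => s9g m 0 u) = fun u => s9F m 0 u / 2 := by
      funext u; simp [s9g]
    rw [hfun]
    refine h.congr_deriv (Eq.symm ?_)
    rw [s9D_zero m hm heven t, hgF 1 one_ne_zero, hgF (m - 1) (by omega)]
    ring
  rcases eq_or_ne j 1 with rfl | hj1
  · -- column 1
    rw [s9sum2 m 0 2 _ (by omega) (by omega) (by omega)
      (fun x hx hx1 hx2 => by
        rw [s9W_val0 m x 1 (by omega) (by omega) (by omega), zero_mul])]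
    rw [s9W_val1 m 0 1 (by omega), s9W_val2 m 2 1 (by omega) (by omega)]
    have hfun : (fun u => s9g m 1 u) = s9F m 1 := hgF 1 one_ne_zero
    rw [hfun]
    have hmid := s9D_mid m 0 t
    norm_num at hmid
    refine (s9F_hasDerivAt m 1 t).congr_deriv (Eq.symm ?_)
    rw [hmid, hgF 2 two_ne_zero]
    have hg0 : s9g m 0 t = s9F m 0 t / 2 := by simp [s9g]
    rw [hg0]
    ring
  rcases eq_or_ne j (m - 1) with rfl | hjm
  · -- column m - 1
    rw [s9sum1 m (m - 2) _ (by omega)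
      (fun x hx hx1 => by
        rw [s9W_val0 m x (m - 1) (by omega) (by omega) (by omega), zero_mul])]
    rw [s9W_val2 m (m - 2) (m - 1) (by omega) (by omega)]
    have hfun : (fun u => s9g m (m - 1) u) = s9F m (m - 1) := hgF (m - 1) (by omega)
    rw [hfun]
    have hmid := s9D_mid m (m - 2) t
    rw [show m - 2 + 1 = m - 1 by omega, show m - 2 + 2 = m by omega] at hmid
    refine (s9F_hasDerivAt m (m - 1) t).congr_deriv (Eq.symm ?_)
    rw [hmid, s9F_top m (by omega) t, hgF (m - 2) (by omega)]
    ring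
  · -- interior columns
    have hj2 : 2 ≤ j := by omega
    have hjm2 : j ≤ m - 2 := by omega
    rw [s9sum2 m (j - 1) (j + 1) _ (by omega) (by omega) (by omega)
      (fun x hx hx1 hx2 => by
        rw [s9W_val0 m x j (by omega) (by omega) (by omega), zero_mul])]
    rw [s9W_val2 m (j - 1) j (by omega) (by omega),
      s9W_val2 m (j + 1) j (by omega) (by omega)]
    have hfun : (fun u => s9g m j u) = s9F m j := hgF j (by omega)
    rw [hfun]
    have hmid := s9D_mid m (j - 1) t
    rw [show j - 1 + 1 = j by omega, show j - 1 + 2 = j + 1 by omega] at hmid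
    refine (s9F_hasDerivAt m j t).congr_deriv (Eq.symm ?_)
    rw [hmid, hgF (j - 1) (by omega), hgF (j + 1) (by omega)]
    ring

/-! ### Main theorem -/

/-- For even `m` (with `m ≥ 3`, so `m ≥ 4`), every `t ∈ ℝ` and every
`1 ≤ p ≤ m−1`, the `(0,p)` entry of `exp(tΩ)` equals
`(2/m²)·((m−p)·(e^{2t} + (−1)^p·e^{−2t}) + 2·Σ_{q=1}^{(m−2)/2} [(m−p)·cos(2πpq/m)
 + 2t·sin(2πpq/m)·sin(2πq/m)]·e^{2t·cos(2πq/m)})`. -/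
theorem stmt9 (m : ℕ) (hm : 3 ≤ m) (heven : Even m) (t : ℝ)
    (p : ℕ) (hp1 : 1 ≤ p) (hpm : p ≤ m - 1) :
    (NormedSpace.exp (t • OmegaMat m)) ⟨0, by omega⟩ ⟨p, by omega⟩ =
      (2 / (m : ℝ) ^ 2) * (((m : ℝ) - p) *
          (Real.exp (2 * t) + (-1 : ℝ) ^ p * Real.exp (-2 * t)) +
        2 * ∑ q ∈ Finset.Icc 1 ((m - 2) / 2),
          (((m : ℝ) - p) * Real.cos (2 * Real.pi * p * q / m) +
            2 * t * Real.sin (2 * Real.pi * p * q / m) * Real.sin (2 * Real.pi * q / m)) *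
          Real.exp (2 * t * Real.cos (2 * Real.pi * q / m))) := by
  have hm4 : 4 ≤ m := by obtain ⟨k, hk⟩ := heven; omega
  set E : ℝ → Matrix (Fin m) (Fin m) ℝ := fun u => NormedSpace.exp (u • OmegaMat m) with hE
  -- the function φ j is constant
  have hφder : ∀ (j : Fin m) (u : ℝ),
      HasDerivAt (fun v : ℝ => ∑ i : Fin m, s9g m i.val v * E (-v) i j) 0 u := by
    intro j u
    have hterm : ∀ i : Fin m, HasDerivAt (fun v : ℝ => s9g m i.val v * E (-v) i j)
        ((∑ k ∈ Finset.range m, s9W m k i.val * s9g m k u) * E (-u) i j +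
          s9g m i.val u * (((E (-u) * OmegaMat m) i j) * (-1))) u := by
      intro i
      have h1 := s9g_hasDeriv m hm heven u i.val i.isLt
      have h2 : HasDerivAt (fun v : ℝ => E (-v) i j)
          (((E (-u) * OmegaMat m) i j) * (-1)) u := by
        have h3 := expOmega_entry_deriv m i j (-u)
        exact h3.comp u (hasDerivAt_neg u)
      exact h1.mul h2
    have hsum := HasDerivAt.fun_sum (fun i (_ : i ∈ Finset.univ) => hterm i)
    have hval : (∑ i : Fin m,
        ((∑ k ∈ Finset.range m, s9W m k i.val * s9g m k u) * E (-u) i j +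
          s9g m i.val u * (((E (-u) * OmegaMat m) i j) * (-1)))) = 0 := by
      rw [Finset.sum_add_distrib]
      have hA : ∑ i : Fin m, (∑ k ∈ Finset.range m, s9W m k i.val * s9g m k u) * E (-u) i j
          = ∑ i : Fin m, s9g m i.val u * ((E (-u) * OmegaMat m) i j) := by
        have hinner : ∀ i : Fin m,
            (∑ k ∈ Finset.range m, s9W m k i.val * s9g m k u)
              = ∑ k : Fin m, OmegaMat m k i * s9g m k.val u := by
          intro i
          rw [← Fin.sum_univ_eq_sum_range (fun k => s9W m k i.val * s9g m k u) m]
          exact Finset.sum_congr rfl fun k _ => by rw [s9W_omega]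
        calc ∑ i : Fin m, (∑ k ∈ Finset.range m, s9W m k i.val * s9g m k u) * E (-u) i j
            = ∑ i : Fin m, ∑ k : Fin m, (OmegaMat m k i * s9g m k.val u) * E (-u) i j := by
              refine Finset.sum_congr rfl fun i _ => ?_
              rw [hinner i, Finset.sum_mul]
          _ = ∑ k : Fin m, ∑ i : Fin m, (OmegaMat m k i * s9g m k.val u) * E (-u) i j :=
              Finset.sum_comm
          _ = ∑ k : Fin m, s9g m k.val u * ((OmegaMat m * E (-u)) k j) := by
              refine Finset.sum_congr rfl fun k _ => ?_
              rw [Matrix.mul_apply, Finset.mul_sum]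
              refine Finset.sum_congr rfl fun i _ => ?_
              ring
          _ = ∑ k : Fin m, s9g m k.val u * ((E (-u) * OmegaMat m) k j) := by
              rw [expOmega_mul_comm]
      rw [hA, ← Finset.sum_add_distrib]
      apply Finset.sum_eq_zero
      intro i _
      ring
    rw [← hval]
    exact hsum
  have hφconst : ∀ (j : Fin m),
      (∑ i : Fin m, s9g m i.val t * E (-t) i j)
        = (if j.val = 0 then (1 : ℝ) else 0) := by
    intro j
    have hdiff : Differentiable ℝ (fun v : ℝ => ∑ i : Fin m, s9g m i.val v * E (-v) i j) :=
      fun u => (hφder j u).differentiableAt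
    have hconst := is_const_of_deriv_eq_zero hdiff (fun u => (hφder j u).deriv) t 0
    rw [hconst]
    have hE0 : E (-(0:ℝ)) = 1 := by
      show NormedSpace.exp ((-(0:ℝ)) • OmegaMat m) = 1
      rw [neg_zero, zero_smul, NormedSpace.exp_zero]
    rw [hE0]
    have : ∀ i : Fin m, s9g m i.val 0 * (1 : Matrix (Fin m) (Fin m) ℝ) i j
        = if i = j then s9g m i.val 0 else 0 := by
      intro i
      rw [Matrix.one_apply]
      split_ifs <;> ring
    rw [Finset.sum_congr rfl fun i _ => this i, Finset.sum_ite_eq' Finset.univ j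
      (fun i => s9g m i.val 0), if_pos (Finset.mem_univ j)]
    rw [s9g_init m j.val hm heven (by omega)]
  -- conclude: entry (0, p') of E t equals s9g
  have hmain : ∀ p' : Fin m, E t ⟨0, by omega⟩ p' = s9g m p'.val t := by
    intro p'
    have hstep1 : E t ⟨0, by omega⟩ p'
        = ∑ j : Fin m, (if j.val = 0 then (1:ℝ) else 0) * E t j p' := by
      have : ∀ j : Fin m, (if j.val = 0 then (1:ℝ) else 0) * E t j p'
          = if j = ⟨0, by omega⟩ then E t j p' else 0 := by
        intro j
        by_cases h : j.val = 0
        · have hj : j = ⟨0, by omega⟩ := Fin.ext h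
          rw [if_pos h, if_pos hj, one_mul]
        · have hj : ¬(j = ⟨0, by omega⟩) := fun hh => h (by rw [hh])
          rw [if_neg h, if_neg hj, zero_mul]
      rw [Finset.sum_congr rfl fun j _ => this j,
        Finset.sum_ite_eq' Finset.univ _ (fun j => E t j p'), if_pos (Finset.mem_univ _)]
    rw [hstep1]
    calc ∑ j : Fin m, (if j.val = 0 then (1:ℝ) else 0) * E t j p'
        = ∑ j : Fin m, (∑ i : Fin m, s9g m i.val t * E (-t) i j) * E t j p' := by
          refine Finset.sum_congr rfl fun j _ => ?_
          rw [hφconst j]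
      _ = ∑ j : Fin m, ∑ i : Fin m, s9g m i.val t * (E (-t) i j * E t j p') := by
          refine Finset.sum_congr rfl fun j _ => ?_
          rw [Finset.sum_mul]
          refine Finset.sum_congr rfl fun i _ => ?_
          ring
      _ = ∑ i : Fin m, ∑ j : Fin m, s9g m i.val t * (E (-t) i j * E t j p') :=
          Finset.sum_comm
      _ = ∑ i : Fin m, s9g m i.val t * ((E (-t) * E t) i p') := by
          refine Finset.sum_congr rfl fun i _ => ?_
          rw [Matrix.mul_apply, Finset.mul_sum]
      _ = ∑ i : Fin m, s9g m i.val t * ((1 : Matrix (Fin m) (Fin m) ℝ) i p') := by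
          rw [expOmega_inv]
      _ = s9g m p'.val t := by
          have : ∀ i : Fin m, s9g m i.val t * (1 : Matrix (Fin m) (Fin m) ℝ) i p'
              = if i = p' then s9g m i.val t else 0 := by
            intro i
            rw [Matrix.one_apply]
            split_ifs <;> ring
          rw [Finset.sum_congr rfl fun i _ => this i, Finset.sum_ite_eq' Finset.univ p'
            (fun i => s9g m i.val t), if_pos (Finset.mem_univ p')]
  rw [show (NormedSpace.exp (t • OmegaMat m)) ⟨0, by omega⟩ ⟨p, by omega⟩ = s9g m p t
    from hmain ⟨p, by omega⟩]
  simp only [s9g, s9F, if_neg (by omega : ¬ p = 0)]
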